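/- Let N be a non-zero weakly S-primary submodule of an R-module M with S ∩ Z(M) = ∅. Then (N :_M s) is a weakly primary submodule of M for some s ∈ S. -/

import Mathlib

open Submodule

/-- `N` is a weakly `S`-primary submodule of `M`. -/
def IsWeaklySPrimary {R : Type*} [CommRing R] {M : Type*} [AddCommGroup M] [Module R M]
    (S : Set R) (N : Submodule R M) : Prop :=
  ((N.colon ⊤ : Ideal R) : Set R) ∩ S = ∅ ∧
    ∃ s ∈ S, ∀ (a : R) (m : M), a • m ≠ 0 → a • m ∈ N →
      s * a ∈ (N.colon ⊤ : Ideal R).radical ∨ s • m ∈ N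

/-- `N` is an `S`-primary submodule of `M`. -/
def IsSPrimary {R : Type*} [CommRing R] {M : Type*} [AddCommGroup M] [Module R M]
    (S : Set R) (N : Submodule R M) : Prop :=
  ((N.colon ⊤ : Ideal R) : Set R) ∩ S = ∅ ∧
    ∃ s ∈ S, ∀ (a : R) (m : M), a • m ∈ N →
      s * a ∈ (N.colon ⊤ : Ideal R).radical ∨ s • m ∈ N

/-- `N` is a weakly primary (proper) submodule of `M`. -/
def IsWeaklyPrimary {R : Type*} [CommRing R] {M : Type*} [AddCommGroup M] [Module R M]
    (N : Submodule R M) : Prop :=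
  N ≠ ⊤ ∧ ∀ (a : R) (m : M), a • m ≠ 0 → a • m ∈ N →
      a ∈ (N.colon ⊤ : Ideal R).radical ∨ m ∈ N

/-- `I` is a weakly `S`-primary ideal of `R`. -/
def IsWeaklySPrimaryIdeal {R : Type*} [CommRing R] (S : Set R) (I : Ideal R) : Prop :=
  (I : Set R) ∩ S = ∅ ∧
    ∃ s ∈ S, ∀ a b : R, a * b ≠ 0 → a * b ∈ I → s * a ∈ I.radical ∨ s * b ∈ I

theorem stmt8 {R : Type*} [CommRing R] {M : Type*} [AddCommGroup M] [Module R M]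
    (S : Set R) (hS : ∀ x ∈ S, ∀ y ∈ S, x * y ∈ S)
    (N : Submodule R M) (hN : IsWeaklySPrimary S N) (hN0 : N ≠ ⊥)
    (hZ : S ∩ {r : R | ∃ m : M, m ≠ 0 ∧ r • m = 0} = ∅) :
    ∃ s ∈ S, IsWeaklyPrimary (N.comap (LinearMap.lsmul R M s)) := by
  obtain ⟨hdisj, s, hsS, hws⟩ := hN
  -- s-powers stay in S
  have hpow : ∀ n : ℕ, s ^ (n + 1) ∈ S := by
    intro n
    induction n with
    | zero => simpa using hsS
    | succ k ih => rw [pow_succ]; exact hS _ ih _ hsS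
  -- s acts injectively
  have hreg : ∀ m : M, s • m = 0 → m = 0 := by
    intro m hm
    by_contra hm0
    have : s ∈ S ∩ {r : R | ∃ m : M, m ≠ 0 ∧ r • m = 0} := ⟨hsS, m, hm0, hm⟩
    rw [hZ] at this
    exact this
  have hregpow : ∀ (n : ℕ) (m : M), s ^ n • m = 0 → m = 0 := by
    intro n
    induction n with
    | zero => intro m hm; simpa using hm
    | succ k ih =>
        intro m hm
        rw [pow_succ, mul_comm, mul_smul] at hm
        exact ih m (hreg _ hm)
  -- no power of s is in the radical of (N : ⊤)
  have hdisj' : ∀ r : R, r ∈ (N.colon ⊤ : Ideal R) → r ∈ S → False := by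
    intro r h1 h2
    have : r ∈ ((N.colon ⊤ : Ideal R) : Set R) ∩ S := ⟨h1, h2⟩
    rw [hdisj] at this
    exact this
  have hsrad : ∀ n : ℕ, s ^ (n + 1) ∈ (N.colon ⊤ : Ideal R).radical → False := by
    intro n hn
    obtain ⟨t, ht⟩ := Ideal.mem_radical_iff.mp hn
    rw [← pow_mul] at ht
    have h1 : s ^ ((n + 1) * t + 1) ∈ (N.colon ⊤ : Ideal R) := by
      rw [pow_succ]
      exact Ideal.mul_mem_right _ _ ht
    exact hdisj' _ h1 (hpow _)
  refine ⟨s, hsS, ?_, ?_⟩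
  · -- properness
    intro htop
    refine hdisj' s ?_ hsS
    rw [Submodule.mem_colon]
    intro m _
    have : m ∈ N.comap (LinearMap.lsmul R M s) := htop ▸ Submodule.mem_top
    simpa using this
  · intro a m hne hmem
    have hmem' : a • s • m ∈ N := by simpa using hmem
    have hne' : a • s • m ≠ 0 := by
      rw [smul_comm]
      intro h
      exact hne (hreg _ h)
    rcases hws a (s • m) hne' hmem' with h1 | h2
    · -- s * a ∈ radical (N : ⊤); show a ∈ radical (K : ⊤)
      left
      obtain ⟨n, hn⟩ := Ideal.mem_radical_iff.mp h1
      refine Ideal.mem_radical_iff.mpr ⟨n, ?_⟩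
      rw [Submodule.mem_colon]
      intro m' _
      simp only [Submodule.mem_comap, LinearMap.lsmul_apply]
      by_cases hz : a ^ n • m' = 0
      · rw [hz, smul_zero]; exact N.zero_mem
      · have hprod : s ^ n • a ^ n • m' ∈ N := by
          rw [← mul_smul, ← mul_pow]
          exact Submodule.mem_colon.mp hn m' trivial
        have hprodne : s ^ n • a ^ n • m' ≠ 0 := fun h => hz (hregpow n _ h)
        rcases hws (s ^ n) (a ^ n • m') hprodne hprod with h3 | h4
        · exact absurd (by rw [← pow_succ'] at h3; exact h3) (fun h => hsrad n h)
        · exact h4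
    · -- s • s • m ∈ N
      have hm0 : m ≠ 0 := fun h => hne (by rw [h, smul_zero])
      have hne2 : (s * s) • m ≠ 0 := by
        rw [mul_smul]
        intro h
        exact hm0 (hreg _ (hreg _ h))
      have hmem2 : (s * s) • m ∈ N := by rw [mul_smul]; exact h2
      rcases hws (s * s) m hne2 hmem2 with h3 | h4
      · exfalso
        refine hsrad 2 ?_
        have : s * (s * s) = s ^ (2 + 1) := by ring
        rwa [this] at h3
      · right
        simpa using h4
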